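/- The trailing principal block submatrix of the clairvoyant cost matrix over horizon T+1 is dominated by the clairvoyant cost matrix over horizon T: 𝐂_{T+1}^{[1:T+1, 1:T+1]} ⪯ 𝐂_T. (Lemma 2, left inequality.) -/

import Mathlib

open Matrix

noncomputable section

/-- Index type for stacked state / disturbance trajectories over horizon `T`:
block index in `Fin (T+1)`, coordinate in `Fin n`. -/
abbrev SIdx (n T : ℕ) := Fin (T + 1) × Fin n

/-- Index type for stacked input trajectories over horizon `T`. -/
abbrev UIdx (m T : ℕ) := Fin T × Fin m

/-- The block-downshift operator `𝐙`. -/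
def Zshift (n T : ℕ) : Matrix (SIdx n T) (SIdx n T) ℝ :=
  Matrix.of fun p q => if (p.1 : ℕ) = (q.1 : ℕ) + 1 ∧ p.2 = q.2 then (1 : ℝ) else 0

/-- `𝐀 = I_{T+1} ⊗ A`. -/
def bigA (n T : ℕ) (A : Matrix (Fin n) (Fin n) ℝ) : Matrix (SIdx n T) (SIdx n T) ℝ :=
  Matrix.of fun p q => if p.1 = q.1 then A p.2 q.2 else 0

/-- `𝐁 = col(I_T ⊗ B, 0)`. -/
def bigB (n m T : ℕ) (B : Matrix (Fin n) (Fin m) ℝ) : Matrix (SIdx n T) (UIdx m T) ℝ :=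
  Matrix.of fun p q => if (p.1 : ℕ) = (q.1 : ℕ) then B p.2 q.2 else 0

/-- `𝐐 = blkdiag(I_T ⊗ Q, 0)`. -/
def bigQ (n T : ℕ) (Q : Matrix (Fin n) (Fin n) ℝ) : Matrix (SIdx n T) (SIdx n T) ℝ :=
  Matrix.of fun p q => if p.1 = q.1 ∧ (p.1 : ℕ) < T then Q p.2 q.2 else 0

/-- `𝐑 = I_T ⊗ R`. -/
def bigR (m T : ℕ) (R : Matrix (Fin m) (Fin m) ℝ) : Matrix (UIdx m T) (UIdx m T) ℝ :=
  Matrix.of fun p q => if p.1 = q.1 then R p.2 q.2 else 0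

/-- `𝐅 = (I − 𝐙𝐀)⁻¹𝐙𝐁`. -/
def bigF (n m T : ℕ) (A : Matrix (Fin n) (Fin n) ℝ) (B : Matrix (Fin n) (Fin m) ℝ) :
    Matrix (SIdx n T) (UIdx m T) ℝ :=
  (1 - Zshift n T * bigA n T A)⁻¹ * (Zshift n T * bigB n m T B)

/-- `𝐆 = (I − 𝐙𝐀)⁻¹`. -/
def bigG (n T : ℕ) (A : Matrix (Fin n) (Fin n) ℝ) : Matrix (SIdx n T) (SIdx n T) ℝ :=
  (1 - Zshift n T * bigA n T A)⁻¹

/-- The control cost `J_T(u, δ) = xᵀ𝐐x + uᵀ𝐑u` with `x = 𝐅u + 𝐆δ`. -/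
def costJ (n m T : ℕ) (A : Matrix (Fin n) (Fin n) ℝ) (B : Matrix (Fin n) (Fin m) ℝ)
    (Q : Matrix (Fin n) (Fin n) ℝ) (R : Matrix (Fin m) (Fin m) ℝ)
    (u : UIdx m T → ℝ) (δ : SIdx n T → ℝ) : ℝ :=
  let x := bigF n m T A B *ᵥ u + bigG n T A *ᵥ δ
  x ⬝ᵥ (bigQ n T Q *ᵥ x) + u ⬝ᵥ (bigR m T R *ᵥ u)

/-- `𝐏 = 𝐑 + 𝐅ᵀ𝐐𝐅`. -/
def bigP (n m T : ℕ) (A : Matrix (Fin n) (Fin n) ℝ) (B : Matrix (Fin n) (Fin m) ℝ)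
    (Q : Matrix (Fin n) (Fin n) ℝ) (R : Matrix (Fin m) (Fin m) ℝ) :
    Matrix (UIdx m T) (UIdx m T) ℝ :=
  bigR m T R + (bigF n m T A B)ᵀ * bigQ n T Q * bigF n m T A B

/-- The clairvoyant cost matrix `𝐂_T = 𝐆ᵀ𝐐(I + 𝐅𝐑⁻¹𝐅ᵀ𝐐)⁻¹𝐆`. -/
def Cmat (n m T : ℕ) (A : Matrix (Fin n) (Fin n) ℝ) (B : Matrix (Fin n) (Fin m) ℝ)
    (Q : Matrix (Fin n) (Fin n) ℝ) (R : Matrix (Fin m) (Fin m) ℝ) :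
    Matrix (SIdx n T) (SIdx n T) ℝ :=
  (bigG n T A)ᵀ * bigQ n T Q *
    (1 + bigF n m T A B * (bigR m T R)⁻¹ * (bigF n m T A B)ᵀ * bigQ n T Q)⁻¹ * bigG n T A

/-- Assemble `δ = col(x₀, w₀, …, w_{T−1})`. -/
def assemble (n T : ℕ) (x0 : Fin n → ℝ) (w : Fin T × Fin n → ℝ) : SIdx n T → ℝ :=
  fun p => if h : (p.1 : ℕ) = 0 then x0 p.2
    else w (⟨(p.1 : ℕ) - 1, by have := p.1.isLt; omega⟩, p.2)


lemma Zshift_mulVec (n T : ℕ) (v : SIdx n T → ℝ) (p : SIdx n T) :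
    (Zshift n T *ᵥ v) p =
      if h : (p.1 : ℕ) = 0 then 0
      else v (⟨(p.1 : ℕ) - 1, by have := p.1.isLt; omega⟩, p.2) := by
  classical
  simp only [Matrix.mulVec, dotProduct, Zshift, Matrix.of_apply]
  split
  · next h =>
    refine Finset.sum_eq_zero fun q _ => ?_
    rw [if_neg, zero_mul]
    rintro ⟨h1, -⟩; omega
  · next h =>
    rw [Fintype.sum_prod_type,
      Finset.sum_eq_single (⟨(p.1 : ℕ) - 1, by have := p.1.isLt; omega⟩ : Fin (T+1))]
    · rw [Finset.sum_eq_single p.2]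
      · split
        · rw [one_mul]
        · next hc => exact absurd ⟨by simp; omega, rfl⟩ hc
      · intro b _ hb; rw [if_neg, zero_mul]; rintro ⟨-, h2⟩; exact hb h2.symm
      · intro hb; exact absurd (Finset.mem_univ _) hb
    · intro b _ hb
      refine Finset.sum_eq_zero fun j _ => ?_
      rw [if_neg, zero_mul]
      rintro ⟨h1, -⟩
      have h1' : (p.1 : ℕ) = (b : ℕ) + 1 := h1
      apply hb; rw [Fin.eq_mk_iff_val_eq]; omega
    · intro hb; exact absurd (Finset.mem_univ _) hb

lemma bigA_mulVec (n T : ℕ) (A : Matrix (Fin n) (Fin n) ℝ) (v : SIdx n T → ℝ) (p : SIdx n T) :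
    (bigA n T A *ᵥ v) p = ∑ j, A p.2 j * v (p.1, j) := by
  classical
  simp only [Matrix.mulVec, dotProduct, bigA, Matrix.of_apply]
  rw [Fintype.sum_prod_type, Finset.sum_eq_single p.1]
  · simp
  · intro b _ hb
    refine Finset.sum_eq_zero fun j _ => ?_
    rw [if_neg (Ne.symm hb), zero_mul]
  · intro hb; exact absurd (Finset.mem_univ _) hb

lemma bigB_mulVec (n m T : ℕ) (B : Matrix (Fin n) (Fin m) ℝ) (v : UIdx m T → ℝ) (p : SIdx n T) :
    (bigB n m T B *ᵥ v) p =
      if h : (p.1 : ℕ) < T then ∑ j, B p.2 j * v (⟨(p.1 : ℕ), h⟩, j) else 0 := by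
  classical
  simp only [Matrix.mulVec, dotProduct, bigB, Matrix.of_apply]
  split
  · next h =>
    rw [Fintype.sum_prod_type, Finset.sum_eq_single (⟨(p.1 : ℕ), h⟩ : Fin T)]
    · simp
    · intro b _ hb
      refine Finset.sum_eq_zero fun j _ => ?_
      rw [if_neg, zero_mul]
      intro h1; apply hb; refine Fin.ext ?_; rw [Fin.val_mk]; exact h1.symm
    · intro hb; exact absurd (Finset.mem_univ _) hb
  · next h =>
    refine Finset.sum_eq_zero fun q _ => ?_
    rw [if_neg, zero_mul]
    intro h1; exact h (h1 ▸ q.1.isLt)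

lemma bigQ_mulVec (n T : ℕ) (Q : Matrix (Fin n) (Fin n) ℝ) (v : SIdx n T → ℝ) (p : SIdx n T) :
    (bigQ n T Q *ᵥ v) p = if (p.1 : ℕ) < T then ∑ j, Q p.2 j * v (p.1, j) else 0 := by
  classical
  simp only [Matrix.mulVec, dotProduct, bigQ, Matrix.of_apply]
  split
  · next h =>
    rw [Fintype.sum_prod_type, Finset.sum_eq_single p.1]
    · simp [h]
    · intro b _ hb
      refine Finset.sum_eq_zero fun j _ => ?_
      rw [if_neg, zero_mul]
      rintro ⟨h1, -⟩; exact hb h1.symm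
    · intro hb; exact absurd (Finset.mem_univ _) hb
  · next h =>
    refine Finset.sum_eq_zero fun q _ => ?_
    rw [if_neg, zero_mul]
    rintro ⟨h1, h2⟩; exact h (h1 ▸ h2)

lemma bigR_mulVec (m T : ℕ) (R : Matrix (Fin m) (Fin m) ℝ) (v : UIdx m T → ℝ) (p : UIdx m T) :
    (bigR m T R *ᵥ v) p = ∑ j, R p.2 j * v (p.1, j) := by
  classical
  simp only [Matrix.mulVec, dotProduct, bigR, Matrix.of_apply]
  rw [Fintype.sum_prod_type, Finset.sum_eq_single p.1]
  · simp
  · intro b _ hb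
    refine Finset.sum_eq_zero fun j _ => ?_
    rw [if_neg (Ne.symm hb), zero_mul]
  · intro hb; exact absurd (Finset.mem_univ _) hb

lemma ZA_pow_mulVec_eq_zero (n T : ℕ) (A : Matrix (Fin n) (Fin n) ℝ) :
    ∀ k (v : SIdx n T → ℝ) (p : SIdx n T), (p.1 : ℕ) < k →
      (((Zshift n T * bigA n T A) ^ k) *ᵥ v) p = 0 := by
  intro k
  induction k with
  | zero => intro v p hp; omega
  | succ k ih =>
    intro v p hp
    rw [pow_succ', Matrix.mul_assoc, ← Matrix.mulVec_mulVec, ← Matrix.mulVec_mulVec,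
      Zshift_mulVec]
    split
    · rfl
    · next h =>
      rw [bigA_mulVec]
      refine Finset.sum_eq_zero fun j _ => ?_
      rw [ih v (_, j) (by simp; omega), mul_zero]

lemma isUnit_one_sub_ZA (n T : ℕ) (A : Matrix (Fin n) (Fin n) ℝ) :
    IsUnit (1 - Zshift n T * bigA n T A) := by
  refine IsNilpotent.isUnit_one_sub ⟨T + 1, ?_⟩
  ext p q
  have := ZA_pow_mulVec_eq_zero n T A (T + 1) (Pi.single q 1) p (by have := p.1.isLt; omega)
  simpa [Matrix.mulVec_single] using this

lemma one_sub_ZA_mul_G (n T : ℕ) (A : Matrix (Fin n) (Fin n) ℝ) :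
    (1 - Zshift n T * bigA n T A) * bigG n T A = 1 :=
  Matrix.mul_nonsing_inv _ ((Matrix.isUnit_iff_isUnit_det _).mp (isUnit_one_sub_ZA n T A))

lemma G_mul_one_sub_ZA (n T : ℕ) (A : Matrix (Fin n) (Fin n) ℝ) :
    bigG n T A * (1 - Zshift n T * bigA n T A) = 1 :=
  Matrix.nonsing_inv_mul _ ((Matrix.isUnit_iff_isUnit_det _).mp (isUnit_one_sub_ZA n T A))

lemma transpose_eq_of_isHermitian {ι : Type*} {M : Matrix ι ι ℝ} (h : M.IsHermitian) :
    Mᵀ = M := by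
  ext i j
  have := congrFun (congrFun h i) j
  simpa [Matrix.conjTranspose_apply] using this

lemma conjTranspose_eq_transpose_real {ι κ : Type*} (M : Matrix ι κ ℝ) : Mᴴ = Mᵀ := by
  ext i j; simp [Matrix.conjTranspose_apply]

lemma dot_bigR (m T : ℕ) (R : Matrix (Fin m) (Fin m) ℝ) (x : UIdx m T → ℝ) :
    x ⬝ᵥ (bigR m T R *ᵥ x) =
      ∑ k : Fin T, (fun i => x (k, i)) ⬝ᵥ (R *ᵥ fun i => x (k, i)) := by
  simp only [dotProduct]
  rw [Fintype.sum_prod_type]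
  refine Finset.sum_congr rfl fun k _ => Finset.sum_congr rfl fun i _ => ?_
  rw [bigR_mulVec]
  simp [Matrix.mulVec, dotProduct]

lemma dot_bigQ (n T : ℕ) (Q : Matrix (Fin n) (Fin n) ℝ) (x : SIdx n T → ℝ) :
    x ⬝ᵥ (bigQ n T Q *ᵥ x) =
      ∑ k : Fin (T+1), if (k : ℕ) < T then
        (fun i => x (k, i)) ⬝ᵥ (Q *ᵥ fun i => x (k, i)) else 0 := by
  simp only [dotProduct]
  rw [Fintype.sum_prod_type]
  refine Finset.sum_congr rfl fun k _ => ?_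
  by_cases h : (k : ℕ) < T
  · rw [if_pos h]
    refine Finset.sum_congr rfl fun i _ => ?_
    rw [bigQ_mulVec, if_pos h]
    simp [Matrix.mulVec, dotProduct]
  · rw [if_neg h]
    refine Finset.sum_eq_zero fun i _ => ?_
    rw [bigQ_mulVec, if_neg h, mul_zero]

lemma bigR_posDef (m T : ℕ) (R : Matrix (Fin m) (Fin m) ℝ) (hR : R.PosDef) :
    (bigR m T R).PosDef := by
  have hsym : ∀ i j, R i j = R j i := fun i j => by
    conv_lhs => rw [← hR.1]
    simp [Matrix.conjTranspose_apply]
  refine Matrix.PosDef.of_dotProduct_mulVec_pos ?_ ?_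
  · ext p q
    simp only [Matrix.conjTranspose_apply, bigR, Matrix.of_apply, star_trivial]
    by_cases h : p.1 = q.1
    · rw [if_pos h.symm, if_pos h, hsym]
    · rw [if_neg (fun hh => h hh.symm), if_neg h]
  · intro x hx
    rw [star_trivial, dot_bigR]
    obtain ⟨p, hp⟩ : ∃ p, x p ≠ 0 := by
      by_contra hc; push_neg at hc; exact hx (funext hc)
    have hblock : (fun i => x (p.1, i)) ≠ 0 := by
      intro hc; exact hp (by simpa using congrFun hc p.2)
    refine lt_of_lt_of_le (hR.dotProduct_mulVec_pos hblock) ?_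
    rw [star_trivial]
    refine Finset.single_le_sum (f := fun k =>
      (fun i => x (k, i)) ⬝ᵥ (R *ᵥ fun i => x (k, i))) (fun k _ => ?_) (Finset.mem_univ p.1)
    have := hR.posSemidef.dotProduct_mulVec_nonneg (fun i => x (k, i))
    simpa [star_trivial] using this

lemma bigQ_posSemidef (n T : ℕ) (Q : Matrix (Fin n) (Fin n) ℝ) (hQ : Q.PosSemidef) :
    (bigQ n T Q).PosSemidef := by
  have hsym : ∀ i j, Q i j = Q j i := fun i j => by
    conv_lhs => rw [← hQ.1]
    simp [Matrix.conjTranspose_apply]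
  refine Matrix.PosSemidef.of_dotProduct_mulVec_nonneg ?_ ?_
  · ext p q
    simp only [Matrix.conjTranspose_apply, bigQ, Matrix.of_apply, star_trivial]
    by_cases h : p.1 = q.1
    · by_cases h2 : (p.1 : ℕ) < T
      · rw [if_pos ⟨h.symm, h ▸ h2⟩, if_pos ⟨h, h2⟩, hsym]
      · rw [if_neg (fun hh => h2 (h ▸ hh.2)), if_neg (fun hh => h2 hh.2)]
    · rw [if_neg (fun hh => h hh.1.symm), if_neg (fun hh => h hh.1)]
  · intro x
    rw [star_trivial, dot_bigQ]
    refine Finset.sum_nonneg fun k _ => ?_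
    by_cases h : (k : ℕ) < T
    · rw [if_pos h]
      have := hQ.dotProduct_mulVec_nonneg (fun i => x (k, i))
      simpa [star_trivial] using this
    · rw [if_neg h]

lemma bigP_posDef (n m T : ℕ) (A : Matrix (Fin n) (Fin n) ℝ) (B : Matrix (Fin n) (Fin m) ℝ)
    (Q : Matrix (Fin n) (Fin n) ℝ) (R : Matrix (Fin m) (Fin m) ℝ)
    (hQ : Q.PosSemidef) (hR : R.PosDef) : (bigP n m T A B Q R).PosDef := by
  refine Matrix.PosDef.add_posSemidef (bigR_posDef m T R hR) ?_
  have h := (bigQ_posSemidef n T Q hQ).conjTranspose_mul_mul_same (bigF n m T A B)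
  rwa [conjTranspose_eq_transpose_real] at h

/-- The Schur-complement form of the clairvoyant cost matrix. -/
def Smat (n m T : ℕ) (A : Matrix (Fin n) (Fin n) ℝ) (B : Matrix (Fin n) (Fin m) ℝ)
    (Q : Matrix (Fin n) (Fin n) ℝ) (R : Matrix (Fin m) (Fin m) ℝ) :
    Matrix (SIdx n T) (SIdx n T) ℝ :=
  (bigG n T A)ᵀ * (bigQ n T Q * bigG n T A) -
    (bigG n T A)ᵀ * (bigQ n T Q * (bigF n m T A B * ((bigP n m T A B Q R)⁻¹ *
      ((bigF n m T A B)ᵀ * (bigQ n T Q * bigG n T A)))))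

lemma key_inv (n m T : ℕ) (A : Matrix (Fin n) (Fin n) ℝ) (B : Matrix (Fin n) (Fin m) ℝ)
    (Q : Matrix (Fin n) (Fin n) ℝ) (R : Matrix (Fin m) (Fin m) ℝ)
    (hQ : Q.PosSemidef) (hR : R.PosDef) :
    (1 + bigF n m T A B * (bigR m T R)⁻¹ * (bigF n m T A B)ᵀ * bigQ n T Q)⁻¹ =
      1 - bigF n m T A B * ((bigP n m T A B Q R)⁻¹ * ((bigF n m T A B)ᵀ * bigQ n T Q)) := by
  set F := bigF n m T A B with hF
  set Qb := bigQ n T Q with hQb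
  set Rb := bigR m T R with hRb
  set P := bigP n m T A B Q R with hP
  have hRu : Rb⁻¹ * Rb = 1 :=
    Matrix.nonsing_inv_mul _ ((Matrix.isUnit_iff_isUnit_det _).mp (bigR_posDef m T R hR).isUnit)
  have hPu : P * P⁻¹ = 1 :=
    Matrix.mul_nonsing_inv _ ((Matrix.isUnit_iff_isUnit_det _).mp
      (bigP_posDef n m T A B Q R hQ hR).isUnit)
  have hFQF : Fᵀ * Qb * F = P - Rb := by
    rw [hP]; unfold bigP; rw [← hRb, ← hQb, ← hF]; abel
  refine Matrix.inv_eq_right_inv ?_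
  set X := F * Rb⁻¹ * Fᵀ * Qb with hX
  set Y := F * (P⁻¹ * (Fᵀ * Qb)) with hY
  have hXY : X * Y = X - Y := by
    calc X * Y = F * Rb⁻¹ * (Fᵀ * Qb * F) * (P⁻¹ * (Fᵀ * Qb)) := by
          rw [hX, hY]; simp only [Matrix.mul_assoc]
      _ = F * Rb⁻¹ * (P - Rb) * (P⁻¹ * (Fᵀ * Qb)) := by rw [hFQF]
      _ = (F * Rb⁻¹ * P - F) * (P⁻¹ * (Fᵀ * Qb)) := by
          rw [Matrix.mul_sub, Matrix.mul_assoc F Rb⁻¹ Rb, hRu, Matrix.mul_one]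
      _ = F * Rb⁻¹ * (P * P⁻¹) * (Fᵀ * Qb) - F * (P⁻¹ * (Fᵀ * Qb)) := by
          rw [Matrix.sub_mul]; simp only [Matrix.mul_assoc]
      _ = X - Y := by
          rw [hPu, Matrix.mul_one, hX, hY]; simp only [Matrix.mul_assoc]
  calc (1 + X) * (1 - Y) = 1 + X - Y - X * Y := by noncomm_ring
    _ = 1 := by rw [hXY]; abel

lemma Cmat_eq_Smat (n m T : ℕ) (A : Matrix (Fin n) (Fin n) ℝ) (B : Matrix (Fin n) (Fin m) ℝ)
    (Q : Matrix (Fin n) (Fin n) ℝ) (R : Matrix (Fin m) (Fin m) ℝ)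
    (hQ : Q.PosSemidef) (hR : R.PosDef) :
    Cmat n m T A B Q R = Smat n m T A B Q R := by
  unfold Cmat Smat
  rw [key_inv n m T A B Q R hQ hR]
  rw [Matrix.mul_sub, Matrix.sub_mul, Matrix.mul_one]
  simp only [Matrix.mul_assoc]

lemma dp_mv {α β : Type*} [Fintype α] [Fintype β] (M : Matrix α β ℝ) (a : β → ℝ) (w : α → ℝ) :
    (M *ᵥ a) ⬝ᵥ w = a ⬝ᵥ (Mᵀ *ᵥ w) := by
  rw [dotProduct_comm, Matrix.dotProduct_mulVec, Matrix.mulVec_transpose,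
    dotProduct_comm]

lemma mv_dp {α β : Type*} [Fintype α] [Fintype β] (M : Matrix α β ℝ) (v : α → ℝ) (w : β → ℝ) :
    v ⬝ᵥ (M *ᵥ w) = (Mᵀ *ᵥ v) ⬝ᵥ w := by
  have h := dp_mv Mᵀ v w
  rw [Matrix.transpose_transpose] at h
  exact h.symm

lemma costJ_expand (n m T : ℕ) (A : Matrix (Fin n) (Fin n) ℝ) (B : Matrix (Fin n) (Fin m) ℝ)
    (Q : Matrix (Fin n) (Fin n) ℝ) (R : Matrix (Fin m) (Fin m) ℝ)
    (hQ : Q.PosSemidef) (u : UIdx m T → ℝ) (δ : SIdx n T → ℝ) :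
    costJ n m T A B Q R u δ =
      u ⬝ᵥ (bigP n m T A B Q R *ᵥ u)
      + 2 * (u ⬝ᵥ ((bigF n m T A B)ᵀ *ᵥ (bigQ n T Q *ᵥ (bigG n T A *ᵥ δ))))
      + (bigG n T A *ᵥ δ) ⬝ᵥ (bigQ n T Q *ᵥ (bigG n T A *ᵥ δ)) := by
  have hQsym : (bigQ n T Q)ᵀ = bigQ n T Q :=
    transpose_eq_of_isHermitian (bigQ_posSemidef n T Q hQ).1
  set F := bigF n m T A B
  set G := bigG n T A
  set Qb := bigQ n T Q
  set Rb := bigR m T R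
  unfold costJ
  simp only [Matrix.mulVec_add, dotProduct_add, add_dotProduct]
  have h1 : (F *ᵥ u) ⬝ᵥ (Qb *ᵥ (F *ᵥ u)) = u ⬝ᵥ (Fᵀ *ᵥ (Qb *ᵥ (F *ᵥ u))) := dp_mv _ _ _
  have h2 : (F *ᵥ u) ⬝ᵥ (Qb *ᵥ (G *ᵥ δ)) = u ⬝ᵥ (Fᵀ *ᵥ (Qb *ᵥ (G *ᵥ δ))) := dp_mv _ _ _
  have h3 : (G *ᵥ δ) ⬝ᵥ (Qb *ᵥ (F *ᵥ u)) = u ⬝ᵥ (Fᵀ *ᵥ (Qb *ᵥ (G *ᵥ δ))) := by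
    rw [mv_dp Qb (G *ᵥ δ) (F *ᵥ u), hQsym,
      dotProduct_comm (Qb *ᵥ (G *ᵥ δ)) (F *ᵥ u), dp_mv F u (Qb *ᵥ (G *ᵥ δ))]
  have hP : bigP n m T A B Q R *ᵥ u = Rb *ᵥ u + Fᵀ *ᵥ (Qb *ᵥ (F *ᵥ u)) := by
    unfold bigP
    rw [Matrix.add_mulVec, Matrix.mulVec_mulVec, Matrix.mulVec_mulVec]
  rw [h1, h2, h3, hP, dotProduct_add]
  ring

lemma Smat_quad (n m T : ℕ) (A : Matrix (Fin n) (Fin n) ℝ) (B : Matrix (Fin n) (Fin m) ℝ)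
    (Q : Matrix (Fin n) (Fin n) ℝ) (R : Matrix (Fin m) (Fin m) ℝ)
    (hQ : Q.PosSemidef) (δ : SIdx n T → ℝ) :
    δ ⬝ᵥ (Smat n m T A B Q R *ᵥ δ) =
      (bigG n T A *ᵥ δ) ⬝ᵥ (bigQ n T Q *ᵥ (bigG n T A *ᵥ δ))
      - ((bigF n m T A B)ᵀ *ᵥ (bigQ n T Q *ᵥ (bigG n T A *ᵥ δ))) ⬝ᵥ
          ((bigP n m T A B Q R)⁻¹ *ᵥ ((bigF n m T A B)ᵀ *ᵥ (bigQ n T Q *ᵥ (bigG n T A *ᵥ δ)))) := by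
  have hQsym : (bigQ n T Q)ᵀ = bigQ n T Q :=
    transpose_eq_of_isHermitian (bigQ_posSemidef n T Q hQ).1
  unfold Smat
  rw [Matrix.sub_mulVec, dotProduct_sub]
  simp only [← Matrix.mulVec_mulVec]
  congr 1
  · rw [mv_dp (bigG n T A)ᵀ δ (bigQ n T Q *ᵥ (bigG n T A *ᵥ δ)), Matrix.transpose_transpose]
  · rw [mv_dp (bigG n T A)ᵀ δ (bigQ n T Q *ᵥ (bigF n m T A B *ᵥ ((bigP n m T A B Q R)⁻¹ *ᵥ
        ((bigF n m T A B)ᵀ *ᵥ (bigQ n T Q *ᵥ (bigG n T A *ᵥ δ)))))),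
      Matrix.transpose_transpose,
      mv_dp (bigQ n T Q) (bigG n T A *ᵥ δ) (bigF n m T A B *ᵥ ((bigP n m T A B Q R)⁻¹ *ᵥ
        ((bigF n m T A B)ᵀ *ᵥ (bigQ n T Q *ᵥ (bigG n T A *ᵥ δ))))), hQsym,
      mv_dp (bigF n m T A B) (bigQ n T Q *ᵥ (bigG n T A *ᵥ δ)) ((bigP n m T A B Q R)⁻¹ *ᵥ
        ((bigF n m T A B)ᵀ *ᵥ (bigQ n T Q *ᵥ (bigG n T A *ᵥ δ))))]

lemma quad_lower {ι : Type*} [Fintype ι] [DecidableEq ι]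
    (P : Matrix ι ι ℝ) (hP : P.PosDef) (k : ι → ℝ) (u : ι → ℝ) :
    - (k ⬝ᵥ (P⁻¹ *ᵥ k)) ≤ u ⬝ᵥ (P *ᵥ u) + 2 * (u ⬝ᵥ k) := by
  have hPu : P * P⁻¹ = 1 :=
    Matrix.mul_nonsing_inv _ ((Matrix.isUnit_iff_isUnit_det _).mp hP.isUnit)
  set w := u + P⁻¹ *ᵥ k with hw
  have hPw : P *ᵥ (P⁻¹ *ᵥ k) = k := by
    rw [Matrix.mulVec_mulVec, hPu, Matrix.one_mulVec]
  have key : w ⬝ᵥ (P *ᵥ w) = u ⬝ᵥ (P *ᵥ u) + 2 * (u ⬝ᵥ k) + k ⬝ᵥ (P⁻¹ *ᵥ k) := by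
    have hsymP : Pᵀ = P := transpose_eq_of_isHermitian hP.1
    rw [hw, Matrix.mulVec_add, dotProduct_add, add_dotProduct,
      add_dotProduct, hPw]
    have h1 : (P⁻¹ *ᵥ k) ⬝ᵥ (P *ᵥ u) = u ⬝ᵥ (P *ᵥ (P⁻¹ *ᵥ k)) := by
      rw [mv_dp P (P⁻¹ *ᵥ k) u, hsymP, hPw, dotProduct_comm]
    rw [h1, hPw]
    have h2 : (P⁻¹ *ᵥ k) ⬝ᵥ k = k ⬝ᵥ (P⁻¹ *ᵥ k) := dotProduct_comm _ _
    rw [h2]; ring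
  have hnn : 0 ≤ w ⬝ᵥ (P *ᵥ w) := by
    have := hP.posSemidef.dotProduct_mulVec_nonneg w
    simpa [star_trivial] using this
  linarith [key ▸ hnn]

lemma quad_attain {ι : Type*} [Fintype ι] [DecidableEq ι]
    (P : Matrix ι ι ℝ) (hP : P.PosDef) (k : ι → ℝ) :
    (-(P⁻¹ *ᵥ k)) ⬝ᵥ (P *ᵥ (-(P⁻¹ *ᵥ k))) + 2 * ((-(P⁻¹ *ᵥ k)) ⬝ᵥ k)
      = - (k ⬝ᵥ (P⁻¹ *ᵥ k)) := by
  have hPu : P * P⁻¹ = 1 :=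
    Matrix.mul_nonsing_inv _ ((Matrix.isUnit_iff_isUnit_det _).mp hP.isUnit)
  have hPw : P *ᵥ (P⁻¹ *ᵥ k) = k := by
    rw [Matrix.mulVec_mulVec, hPu, Matrix.one_mulVec]
  rw [Matrix.mulVec_neg, hPw, dotProduct_neg, neg_dotProduct,
    dotProduct_comm (P⁻¹ *ᵥ k) k]
  ring

/-- Extension of a state/disturbance trajectory by a zero block at time 0. -/
def extS (n T : ℕ) (v : SIdx n T → ℝ) : SIdx n (T+1) → ℝ :=
  fun q => if h : (q.1 : ℕ) = 0 then 0
    else v (⟨(q.1 : ℕ) - 1, by have := q.1.isLt; omega⟩, q.2)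

/-- Extension of an input trajectory by a zero block at time 0. -/
def extU (m T : ℕ) (u : UIdx m T → ℝ) : UIdx m (T+1) → ℝ :=
  fun q => if h : (q.1 : ℕ) = 0 then 0
    else u (⟨(q.1 : ℕ) - 1, by have := q.1.isLt; omega⟩, q.2)

lemma extS_succ (n T : ℕ) (v : SIdx n T → ℝ) (k : Fin (T+1)) (i : Fin n) :
    extS n T v (k.succ, i) = v (k, i) := by
  unfold extS
  rw [dif_neg (by simp [Fin.val_succ])]
  congr 1

lemma extS_zero (n T : ℕ) (v : SIdx n T → ℝ) (i : Fin n) :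
    extS n T v (0, i) = 0 := by
  simp [extS]

lemma extU_succ (m T : ℕ) (u : UIdx m T → ℝ) (k : Fin T) (i : Fin m) :
    extU m T u (k.succ, i) = u (k, i) := by
  unfold extU
  rw [dif_neg (by simp [Fin.val_succ])]
  congr 1

lemma extU_zero (m T : ℕ) (u : UIdx m T → ℝ) (i : Fin m) :
    extU m T u (0, i) = 0 := by
  simp [extU]

lemma one_sub_mul_F (n m T : ℕ) (A : Matrix (Fin n) (Fin n) ℝ) (B : Matrix (Fin n) (Fin m) ℝ) :
    (1 - Zshift n T * bigA n T A) * bigF n m T A B = Zshift n T * bigB n m T B := by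
  unfold bigF
  rw [← Matrix.mul_assoc]
  rw [show (1 - Zshift n T * bigA n T A) * (1 - Zshift n T * bigA n T A)⁻¹ = 1 from
    one_sub_ZA_mul_G n T A]
  rw [Matrix.one_mul]

lemma x_unique (n m T : ℕ) (A : Matrix (Fin n) (Fin n) ℝ) (B : Matrix (Fin n) (Fin m) ℝ)
    (u : UIdx m T → ℝ) (δ : SIdx n T → ℝ) (y : SIdx n T → ℝ)
    (hy : y = (Zshift n T * bigA n T A) *ᵥ y + ((Zshift n T * bigB n m T B) *ᵥ u + δ)) :
    y = bigF n m T A B *ᵥ u + bigG n T A *ᵥ δ := by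
  have h1 : (1 - Zshift n T * bigA n T A) *ᵥ y = (Zshift n T * bigB n m T B) *ᵥ u + δ := by
    rw [Matrix.sub_mulVec, Matrix.one_mulVec]
    nth_rewrite 1 [hy]
    abel
  have h2 := congrArg (fun w => bigG n T A *ᵥ w) h1
  simp only [Matrix.mulVec_mulVec, Matrix.mulVec_add] at h2
  rw [G_mul_one_sub_ZA, Matrix.one_mulVec] at h2
  rw [h2]
  congr 1

lemma state_eq (n m T : ℕ) (A : Matrix (Fin n) (Fin n) ℝ) (B : Matrix (Fin n) (Fin m) ℝ)
    (u : UIdx m T → ℝ) (δ : SIdx n T → ℝ) :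
    bigF n m T A B *ᵥ u + bigG n T A *ᵥ δ =
      (Zshift n T * bigA n T A) *ᵥ (bigF n m T A B *ᵥ u + bigG n T A *ᵥ δ) +
        ((Zshift n T * bigB n m T B) *ᵥ u + δ) := by
  have h1 : (1 - Zshift n T * bigA n T A) *ᵥ (bigF n m T A B *ᵥ u + bigG n T A *ᵥ δ) =
      (Zshift n T * bigB n m T B) *ᵥ u + δ := by
    rw [Matrix.mulVec_add, Matrix.mulVec_mulVec, Matrix.mulVec_mulVec, one_sub_mul_F,
      one_sub_ZA_mul_G, Matrix.one_mulVec]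
  rw [Matrix.sub_mulVec, Matrix.one_mulVec] at h1
  rw [← h1]
  abel

lemma state_comp (n m T : ℕ) (A : Matrix (Fin n) (Fin n) ℝ) (B : Matrix (Fin n) (Fin m) ℝ)
    (u : UIdx m T → ℝ) (δ : SIdx n T → ℝ) (p : SIdx n T) :
    (bigF n m T A B *ᵥ u + bigG n T A *ᵥ δ) p =
      (if h : (p.1 : ℕ) = 0 then 0 else
        (∑ j, A p.2 j * (bigF n m T A B *ᵥ u + bigG n T A *ᵥ δ)
          (⟨(p.1 : ℕ) - 1, by have := p.1.isLt; omega⟩, j)) +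
        ∑ j, B p.2 j * u (⟨(p.1 : ℕ) - 1, by have := p.1.isLt; omega⟩, j)) + δ p := by
  conv_lhs => rw [state_eq n m T A B u δ]
  simp only [Pi.add_apply]
  rw [← Matrix.mulVec_mulVec, Zshift_mulVec, ← Matrix.mulVec_mulVec, Zshift_mulVec]
  by_cases h : (p.1 : ℕ) = 0
  · rw [dif_pos h, dif_pos h, dif_pos h]
    simp
  · rw [dif_neg h, dif_neg h, dif_neg h, bigA_mulVec, bigB_mulVec,
      dif_pos (show (((⟨(p.1 : ℕ) - 1, by have := p.1.isLt; omega⟩ : Fin (T+1)), p.2).1 : ℕ) < T by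
        simp only [Fin.val_mk]; have := p.1.isLt; omega)]
    simp only [Pi.add_apply]
    ring

lemma ext_x (n m T : ℕ) (A : Matrix (Fin n) (Fin n) ℝ) (B : Matrix (Fin n) (Fin m) ℝ)
    (u : UIdx m T → ℝ) (δ : SIdx n T → ℝ) :
    bigF n m (T+1) A B *ᵥ extU m T u + bigG n (T+1) A *ᵥ extS n T δ
      = extS n T (bigF n m T A B *ᵥ u + bigG n T A *ᵥ δ) := by
  symm
  apply x_unique
  funext p
  simp only [Pi.add_apply]
  rw [← Matrix.mulVec_mulVec, Zshift_mulVec, ← Matrix.mulVec_mulVec, Zshift_mulVec]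
  by_cases h : (p.1 : ℕ) = 0
  · rw [dif_pos h, dif_pos h]
    unfold extS
    rw [dif_pos h]
    simp
    intro h'; exact absurd (Fin.ext (by simp [h])) h'
  · rw [dif_neg h, dif_neg h, bigA_mulVec, bigB_mulVec]
    have hk : (p.1 : ℕ) - 1 < T + 1 := by have := p.1.isLt; omega
    rw [dif_pos (show (((⟨(p.1 : ℕ) - 1, by have := p.1.isLt; omega⟩ : Fin (T+1+1-1)), p.2).1 : ℕ)
        < T + 1 from hk)]
    -- LHS : extS x p = x (⟨p.1 - 1, _⟩, p.2)
    conv_lhs => rw [show extS n T (bigF n m T A B *ᵥ u + bigG n T A *ᵥ δ) p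
      = (bigF n m T A B *ᵥ u + bigG n T A *ᵥ δ)
          (⟨(p.1 : ℕ) - 1, by have := p.1.isLt; omega⟩, p.2) from by
        unfold extS; rw [dif_neg h]]
    rw [state_comp]
    by_cases hk0 : (p.1 : ℕ) - 1 = 0
    · rw [dif_pos (show ((((⟨(p.1 : ℕ) - 1, hk⟩ : Fin (T+1)), p.2)).1 : ℕ) = 0 from hk0)]
      have hA : ∀ j, extS n T (bigF n m T A B *ᵥ u + bigG n T A *ᵥ δ)
          (⟨(p.1 : ℕ) - 1, by have := p.1.isLt; omega⟩, j) = 0 := fun j => by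
        unfold extS; rw [dif_pos hk0]
      have hB : ∀ j, extU m T u (⟨(p.1 : ℕ) - 1, hk⟩, j) = 0 := fun j => by
        unfold extU; rw [dif_pos hk0]
      simp only [hA, hB, mul_zero, Finset.sum_const_zero, zero_add]
      unfold extS; rw [dif_neg h]
    · rw [dif_neg (show ¬((((⟨(p.1 : ℕ) - 1, hk⟩ : Fin (T+1)), p.2)).1 : ℕ) = 0 from hk0)]
      have hA : ∀ j, extS n T (bigF n m T A B *ᵥ u + bigG n T A *ᵥ δ)
          (⟨(p.1 : ℕ) - 1, by have := p.1.isLt; omega⟩, j)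
          = (bigF n m T A B *ᵥ u + bigG n T A *ᵥ δ)
            (⟨(p.1 : ℕ) - 1 - 1, by have := p.1.isLt; omega⟩, j) := fun j => by
        unfold extS; rw [dif_neg hk0]
      have hB : ∀ j, extU m T u (⟨(p.1 : ℕ) - 1, hk⟩, j)
          = u (⟨(p.1 : ℕ) - 1 - 1, by have := p.1.isLt; omega⟩, j) := fun j => by
        unfold extU; rw [dif_neg hk0]
      have hD : extS n T δ p = δ (⟨(p.1 : ℕ) - 1, by have := p.1.isLt; omega⟩, p.2) := by
        unfold extS; rw [dif_neg h]
      simp only [hA, hB, hD]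
      ring

lemma costJ_ext (n m T : ℕ) (A : Matrix (Fin n) (Fin n) ℝ) (B : Matrix (Fin n) (Fin m) ℝ)
    (Q : Matrix (Fin n) (Fin n) ℝ) (R : Matrix (Fin m) (Fin m) ℝ)
    (u : UIdx m T → ℝ) (δ : SIdx n T → ℝ) :
    costJ n m (T+1) A B Q R (extU m T u) (extS n T δ) = costJ n m T A B Q R u δ := by
  simp only [costJ]
  rw [ext_x]
  set x := bigF n m T A B *ᵥ u + bigG n T A *ᵥ δ with hx
  congr 1
  · rw [dot_bigQ, dot_bigQ, Fin.sum_univ_succ]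
    have h0 : (if ((0 : Fin (T+2)) : ℕ) < T + 1 then
        (fun i => extS n T x (0, i)) ⬝ᵥ (Q *ᵥ fun i => extS n T x (0, i)) else 0) = 0 := by
      split
      · have hz : (fun i => extS n T x ((0 : Fin (T+2)), i)) = (fun _ => (0:ℝ)) :=
          funext fun i => extS_zero n T x i
        rw [hz]
        simp [dotProduct]
      · rfl
    rw [h0, zero_add]
    refine Finset.sum_congr rfl fun k _ => ?_
    have hs : (fun i => extS n T x (k.succ, i)) = fun i => x (k, i) :=
      funext fun i => extS_succ n T x k i
    rw [hs]
    have hcond : ((k.succ : Fin (T+2)) : ℕ) < T + 1 ↔ (k : ℕ) < T := by simp [Fin.val_succ]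
    by_cases hk : (k : ℕ) < T
    · rw [if_pos (hcond.mpr hk), if_pos hk]
    · rw [if_neg (fun hh => hk (hcond.mp hh)), if_neg hk]
  · rw [dot_bigR, dot_bigR, Fin.sum_univ_succ]
    have h0 : (fun i => extU m T u ((0 : Fin (T+1)), i)) = fun _ => (0:ℝ) :=
      funext fun i => extU_zero m T u i
    rw [h0]
    have hz : (fun _ => (0:ℝ)) ⬝ᵥ (R *ᵥ fun _ => (0:ℝ)) = 0 := by simp [dotProduct]
    rw [hz, zero_add]
    refine Finset.sum_congr rfl fun k _ => ?_
    have hs : (fun i => extU m T u (k.succ, i)) = fun i => u (k, i) :=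
      funext fun i => extU_succ m T u k i
    rw [hs]

lemma ext_dot (n T : ℕ) (v : SIdx n T → ℝ) (w : SIdx n (T+1) → ℝ) :
    extS n T v ⬝ᵥ w = ∑ p : SIdx n T, v p * w (p.1.succ, p.2) := by
  rw [dotProduct, Fintype.sum_prod_type, Fin.sum_univ_succ]
  simp only [extS_zero, zero_mul, Finset.sum_const_zero, zero_add, extS_succ]
  rw [Fintype.sum_prod_type]

lemma submatrix_quad (n T : ℕ) (M : Matrix (SIdx n (T+1)) (SIdx n (T+1)) ℝ) (v : SIdx n T → ℝ) :
    v ⬝ᵥ (M.submatrix (fun p : SIdx n T => ((p.1.succ : Fin (T+2)), p.2))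
        (fun p : SIdx n T => ((p.1.succ : Fin (T+2)), p.2)) *ᵥ v)
      = extS n T v ⬝ᵥ (M *ᵥ extS n T v) := by
  rw [ext_dot, dotProduct]
  refine Finset.sum_congr rfl fun p _ => ?_
  congr 1
  have hmv : (M *ᵥ extS n T v) (p.1.succ, p.2)
      = ∑ q : SIdx n T, v q * M (p.1.succ, p.2) (q.1.succ, q.2) := by
    rw [Matrix.mulVec, dotProduct_comm, ext_dot]
  rw [hmv, Matrix.mulVec, dotProduct]
  refine Finset.sum_congr rfl fun q _ => ?_
  rw [Matrix.submatrix_apply, mul_comm]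

lemma bigP_transpose (n m T : ℕ) (A : Matrix (Fin n) (Fin n) ℝ) (B : Matrix (Fin n) (Fin m) ℝ)
    (Q : Matrix (Fin n) (Fin n) ℝ) (R : Matrix (Fin m) (Fin m) ℝ)
    (hQ : Q.PosSemidef) (hR : R.PosDef) :
    (bigP n m T A B Q R)ᵀ = bigP n m T A B Q R := by
  unfold bigP
  rw [Matrix.transpose_add, Matrix.transpose_mul, Matrix.transpose_mul,
    Matrix.transpose_transpose,
    transpose_eq_of_isHermitian (bigQ_posSemidef n T Q hQ).1,
    transpose_eq_of_isHermitian (bigR_posDef m T R hR).1, ← Matrix.mul_assoc]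

lemma Smat_symm (n m T : ℕ) (A : Matrix (Fin n) (Fin n) ℝ) (B : Matrix (Fin n) (Fin m) ℝ)
    (Q : Matrix (Fin n) (Fin n) ℝ) (R : Matrix (Fin m) (Fin m) ℝ)
    (hQ : Q.PosSemidef) (hR : R.PosDef) :
    (Smat n m T A B Q R)ᵀ = Smat n m T A B Q R := by
  have hQs := transpose_eq_of_isHermitian (bigQ_posSemidef n T Q hQ).1
  have hPs : ((bigP n m T A B Q R)⁻¹)ᵀ = (bigP n m T A B Q R)⁻¹ := by
    rw [Matrix.transpose_nonsing_inv, bigP_transpose n m T A B Q R hQ hR]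
  unfold Smat
  simp only [Matrix.transpose_sub, Matrix.transpose_mul, Matrix.transpose_transpose, hQs, hPs,
    Matrix.mul_assoc]

/-- Lemma 2, left inequality: the trailing principal block submatrix of `𝐂_{T+1}` is
dominated by `𝐂_T`, i.e. `𝐂_{T+1}^{[1:T+1, 1:T+1]} ⪯ 𝐂_T`. -/
theorem stmt6 (n m T : ℕ) (hn : 0 < n) (hm : 0 < m) (hT : 1 ≤ T)
    (A : Matrix (Fin n) (Fin n) ℝ) (B : Matrix (Fin n) (Fin m) ℝ)
    (Q : Matrix (Fin n) (Fin n) ℝ) (R : Matrix (Fin m) (Fin m) ℝ)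
    (hQ : Q.PosSemidef) (hR : R.PosDef) :
    (Cmat n m T A B Q R -
      (Cmat n m (T + 1) A B Q R).submatrix
        (fun p : SIdx n T => ((p.1.succ : Fin (T + 2)), p.2))
        (fun p : SIdx n T => ((p.1.succ : Fin (T + 2)), p.2))).PosSemidef := by
  rw [Cmat_eq_Smat n m T A B Q R hQ hR, Cmat_eq_Smat n m (T+1) A B Q R hQ hR]
  refine Matrix.PosSemidef.of_dotProduct_mulVec_nonneg ?_ ?_
  · show _ᴴ = _
    rw [conjTranspose_eq_transpose_real, Matrix.transpose_sub,
      Smat_symm n m T A B Q R hQ hR, Matrix.transpose_submatrix,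
      Smat_symm n m (T+1) A B Q R hQ hR]
  · intro v
    rw [star_trivial, Matrix.sub_mulVec, dotProduct_sub, sub_nonneg, submatrix_quad]
    have hPD : (bigP n m T A B Q R).PosDef := bigP_posDef n m T A B Q R hQ hR
    have hPD1 : (bigP n m (T+1) A B Q R).PosDef := bigP_posDef n m (T+1) A B Q R hQ hR
    set k := (bigF n m T A B)ᵀ *ᵥ (bigQ n T Q *ᵥ (bigG n T A *ᵥ v)) with hk
    set ustar := -((bigP n m T A B Q R)⁻¹ *ᵥ k) with hustar
    have h1 : extS n T v ⬝ᵥ (Smat n m (T+1) A B Q R *ᵥ extS n T v)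
        ≤ costJ n m (T+1) A B Q R (extU m T ustar) (extS n T v) := by
      rw [Smat_quad n m (T+1) A B Q R hQ (extS n T v),
          costJ_expand n m (T+1) A B Q R hQ (extU m T ustar) (extS n T v)]
      have := quad_lower (bigP n m (T+1) A B Q R) hPD1
        ((bigF n m (T+1) A B)ᵀ *ᵥ (bigQ n (T+1) Q *ᵥ (bigG n (T+1) A *ᵥ extS n T v)))
        (extU m T ustar)
      linarith
    have h2 : costJ n m (T+1) A B Q R (extU m T ustar) (extS n T v)
        = costJ n m T A B Q R ustar v := costJ_ext n m T A B Q R ustar v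
    have h3 : costJ n m T A B Q R ustar v = v ⬝ᵥ (Smat n m T A B Q R *ᵥ v) := by
      rw [costJ_expand n m T A B Q R hQ ustar v, Smat_quad n m T A B Q R hQ v]
      have := quad_attain (bigP n m T A B Q R) hPD k
      rw [hustar]
      linarith
    calc extS n T v ⬝ᵥ (Smat n m (T+1) A B Q R *ᵥ extS n T v)
        ≤ costJ n m (T+1) A B Q R (extU m T ustar) (extS n T v) := h1
      _ = costJ n m T A B Q R ustar v := h2
      _ = v ⬝ᵥ (Smat n m T A B Q R *ᵥ v) := h3

end
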